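/- Every element P of the Clarke generalized Jacobian of prox_{γg} at any point x is a symmetric positive semidefinite matrix with ‖P‖ ≤ 1. -/

import Mathlib

open scoped RealInnerProductSpace
open Filter Topology

noncomputable section

abbrev Eucl (n : ℕ) := EuclideanSpace ℝ (Fin n)

/-- `p` is the proximal mapping of `g` with parameter `γ`:
`p x` minimizes `u ↦ g u + ‖u - x‖² / (2γ)`. -/
def IsProx {n : ℕ} (γ : ℝ) (g : Eucl n → EReal) (p : Eucl n → Eucl n) : Prop :=
  ∀ x u, g (p x) + ((‖p x - x‖ ^ 2 / (2 * γ) : ℝ) : EReal)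
        ≤ g u + ((‖u - x‖ ^ 2 / (2 * γ) : ℝ) : EReal)

/-- `g` is proper, lower semicontinuous and convex (with values in `ℝ ∪ {+∞}`). -/
def ProperLscConvex {n : ℕ} (g : Eucl n → EReal) : Prop :=
  (∃ x, g x ≠ ⊤) ∧ (∀ x, g x ≠ ⊥) ∧ LowerSemicontinuous g ∧
  (∀ x y : Eucl n, ∀ a b : ℝ, 0 ≤ a → 0 ≤ b → a + b = 1 →
    g (a • x + b • y) ≤ (a : EReal) * g x + (b : EReal) * g y)

section Aux

variable {n : ℕ} {g : Eucl n → EReal} {γ : ℝ} {p : Eucl n → Eucl n}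

lemma prox_ne_top (hg : ProperLscConvex g) (hp : IsProx γ g p) (x : Eucl n) :
    g (p x) ≠ ⊤ := by
  obtain ⟨x₀, hx₀⟩ := hg.1
  intro h
  have h1 := hp x x₀
  rw [h, EReal.top_add_of_ne_bot (EReal.coe_ne_bot _)] at h1
  rw [← EReal.coe_toReal hx₀ (hg.2.1 x₀), ← EReal.coe_add] at h1
  exact (EReal.coe_ne_top _) (top_le_iff.mp h1)

/-- Real-valued prox optimality inequality. -/
lemma prox_real (hg : ProperLscConvex g) (hp : IsProx γ g p) (x u : Eucl n)
    (hu : g u ≠ ⊤) :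
    (g (p x)).toReal + ‖p x - x‖ ^ 2 / (2 * γ)
      ≤ (g u).toReal + ‖u - x‖ ^ 2 / (2 * γ) := by
  have h1 := hp x u
  rw [← EReal.coe_toReal (prox_ne_top hg hp x) (hg.2.1 _), ← EReal.coe_toReal hu (hg.2.1 u),
    ← EReal.coe_add, ← EReal.coe_add] at h1
  exact_mod_cast h1

end Aux

section Aux2

variable {n : ℕ} {g : Eucl n → EReal} {γ : ℝ} {p : Eucl n → Eucl n}

lemma prox_key (hg : ProperLscConvex g) (hγ : 0 < γ) (hp : IsProx γ g p) (x y : Eucl n) :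
    (g (p x)).toReal - (g (p y)).toReal ≤ ⟪p x - x, p y - p x⟫ / γ := by
  set Gx := (g (p x)).toReal with hGx
  set Gy := (g (p y)).toReal with hGy
  set I := ⟪p x - x, p y - p x⟫ with hI
  set N := ‖p y - p x‖ ^ 2 with hN
  have hγ' : γ ≠ 0 := ne_of_gt hγ
  have key : ∀ t : ℝ, t ∈ Set.Ioc (0:ℝ) 1 →
      Gx - Gy ≤ I / γ + t * (N / (2 * γ)) := by
    intro t ⟨ht0, ht1⟩
    set u := p x + t • (p y - p x) with hu
    have hcomb : u = (1 - t) • p x + t • p y := by rw [hu]; module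
    have hconv := hg.2.2.2 (p x) (p y) (1 - t) t (by linarith) ht0.le (by ring)
    rw [← hcomb] at hconv
    rw [← EReal.coe_toReal (prox_ne_top hg hp x) (hg.2.1 _),
      ← EReal.coe_toReal (prox_ne_top hg hp y) (hg.2.1 _), ← hGx, ← hGy,
      ← EReal.coe_mul, ← EReal.coe_mul, ← EReal.coe_add] at hconv
    have hut : g u ≠ ⊤ := fun h => by
      rw [h] at hconv; exact (EReal.coe_ne_top _) (top_le_iff.mp hconv)
    have hur : (g u).toReal ≤ (1 - t) * Gx + t * Gy := by
      have := EReal.toReal_le_toReal hconv (hg.2.1 u) (EReal.coe_ne_top _)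
      rwa [EReal.toReal_coe] at this
    have hpr := prox_real hg hp x u hut
    have hnorm : ‖u - x‖ ^ 2 = ‖p x - x‖ ^ 2 + 2 * t * I + t ^ 2 * N := by
      have h5 : u - x = (p x - x) + t • (p y - p x) := by rw [hu]; abel
      rw [h5, norm_add_sq_real, real_inner_smul_right, norm_smul]
      simp only [Real.norm_eq_abs]
      rw [mul_pow, sq_abs]
      ring
    rw [hnorm, add_div, add_div] at hpr
    have e1 : (2 * t * I) / (2 * γ) = t * (I / γ) := by field_simp
    have e2 : (t ^ 2 * N) / (2 * γ) = t * (t * (N / (2 * γ))) := by ring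
    have h3 : t * (Gx - Gy) ≤ t * (I / γ) + t * (t * (N / (2 * γ))) := by
      linarith [hpr, hur, e1, e2]
    rw [← mul_le_mul_iff_right₀ ht0, mul_add]
    linarith [h3]
  have hlim : Tendsto (fun t : ℝ => I / γ + t * (N / (2 * γ)))
      (𝓝[>] (0:ℝ)) (𝓝 (I / γ)) := by
    have h6 : ContinuousAt (fun t : ℝ => I / γ + t * (N / (2 * γ))) 0 := by fun_prop
    have h7 : Tendsto (fun t : ℝ => I / γ + t * (N / (2 * γ))) (𝓝[>] (0:ℝ))
        (𝓝 (I / γ + 0 * (N / (2 * γ)))) := h6.tendsto.mono_left nhdsWithin_le_nhds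
    simpa using h7
  refine ge_of_tendsto hlim ?_
  filter_upwards [Ioc_mem_nhdsGT_of_mem (by norm_num : (0:ℝ) ∈ Set.Ico (0:ℝ) 1)] with t ht
  exact key t ht

/-- Firm nonexpansiveness of the prox map. -/
lemma prox_firm (hg : ProperLscConvex g) (hγ : 0 < γ) (hp : IsProx γ g p) (x y : Eucl n) :
    ‖p x - p y‖ ^ 2 ≤ ⟪p x - p y, x - y⟫ := by
  have h1 := prox_key hg hγ hp x y
  have h2 := prox_key hg hγ hp y x
  have h3 : 0 ≤ ⟪p x - x, p y - p x⟫ / γ + ⟪p y - y, p x - p y⟫ / γ := by linarith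
  rw [← add_div] at h3
  have h4 : 0 ≤ ⟪p x - x, p y - p x⟫ + ⟪p y - y, p x - p y⟫ :=
    nonneg_of_mul_nonneg_right (by rwa [div_eq_mul_inv, mul_comm] at h3) (by positivity)
  have h5 : ⟪p x - x, p y - p x⟫ + ⟪p y - y, p x - p y⟫
      = ⟪p x - p y, x - y⟫ - ‖p x - p y‖ ^ 2 := by
    simp only [inner_sub_left, inner_sub_right, ← real_inner_self_eq_norm_sq]
    rw [real_inner_comm (p y) (p x), real_inner_comm x (p y), real_inner_comm y (p x), real_inner_comm (p x) x, real_inner_comm (p y) y]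
    ring
  linarith [h4, h5.symm ▸ h4]

end Aux2

section Aux3

variable {n : ℕ} {g : Eucl n → EReal} {γ : ℝ} {p : Eucl n → Eucl n}

lemma prox_lip (hg : ProperLscConvex g) (hγ : 0 < γ) (hp : IsProx γ g p) (x y : Eucl n) :
    ‖p x - p y‖ ≤ ‖x - y‖ := by
  have h1 := prox_firm hg hγ hp x y
  have h2 : ⟪p x - p y, x - y⟫ ≤ ‖p x - p y‖ * ‖x - y‖ := real_inner_le_norm _ _
  rcases eq_or_lt_of_le (norm_nonneg (p x - p y)) with h | h
  · rw [← h]; exact norm_nonneg _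
  · nlinarith [h1, h2]

/-- The Moreau envelope. -/
def env (g : Eucl n → EReal) (γ : ℝ) (p : Eucl n → Eucl n) (x : Eucl n) : ℝ :=
  (g (p x)).toReal + ‖p x - x‖ ^ 2 / (2 * γ)

lemma env_upper (hg : ProperLscConvex g) (hγ : 0 < γ) (hp : IsProx γ g p) (y z : Eucl n) :
    env g γ p y - env g γ p z ≤ ⟪z - p z, y - z⟫ / γ + ‖y - z‖ ^ 2 / (2 * γ) := by
  have hγ' : γ ≠ 0 := ne_of_gt hγ
  have h1 := prox_real hg hp y (p z) (prox_ne_top hg hp z)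
  have h2 : ‖p z - y‖ ^ 2 = ‖p z - z‖ ^ 2 - 2 * ⟪p z - z, y - z⟫ + ‖y - z‖ ^ 2 := by
    have h3 : p z - y = (p z - z) - (y - z) := by abel
    rw [h3, norm_sub_sq_real]
  have h4 : ⟪z - p z, y - z⟫ = - ⟪p z - z, y - z⟫ := by
    rw [← inner_neg_left]; congr 1; abel
  have h5 : (‖p z - z‖ ^ 2 - 2 * ⟪p z - z, y - z⟫ + ‖y - z‖ ^ 2) / (2 * γ)
      = ‖p z - z‖ ^ 2 / (2 * γ) - ⟪p z - z, y - z⟫ / γ + ‖y - z‖ ^ 2 / (2 * γ) := by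
    field_simp
  rw [h2, h5] at h1
  unfold env
  rw [h4, neg_div]
  linarith

lemma env_err (hg : ProperLscConvex g) (hγ : 0 < γ) (hp : IsProx γ g p) (x y : Eucl n) :
    |env g γ p y - env g γ p x - ⟪(γ⁻¹ : ℝ) • (x - p x), y - x⟫|
      ≤ (5 / (2 * γ)) * ‖y - x‖ ^ 2 := by
  have hγ' : γ ≠ 0 := ne_of_gt hγ
  have h2γ : (0:ℝ) < 2 * γ := by linarith
  set A := ‖y - x‖ ^ 2 with hA
  have hA0 : (0:ℝ) ≤ A := sq_nonneg _
  set I := ⟪x - p x, y - x⟫ with hI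
  set J := ⟪y - p y, y - x⟫ with hJ
  have hup := env_upper hg hγ hp y x
  have hlo := env_upper hg hγ hp x y
  have hinner : ⟪(γ⁻¹ : ℝ) • (x - p x), y - x⟫ = I / γ := by
    rw [real_inner_smul_left, inv_mul_eq_div]
  rw [hinner]
  rw [abs_le]
  constructor
  · -- lower bound
    have h6 : ⟪y - p y, x - y⟫ = - J := by
      rw [hJ, ← inner_neg_right]; congr 1; abel
    have h7 : ‖x - y‖ = ‖y - x‖ := norm_sub_rev _ _
    rw [h6, h7, neg_div] at hlo
    -- hlo : env x - env y ≤ -(J/γ) + A/(2γ)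
    have h8 : J - I = ⟪(y - x) - (p y - p x), y - x⟫ := by
      simp only [hI, hJ, inner_sub_left]; ring
    have h9 : |⟪(y - x) - (p y - p x), y - x⟫| ≤ 2 * A := by
      calc |⟪(y - x) - (p y - p x), y - x⟫| ≤ ‖(y - x) - (p y - p x)‖ * ‖y - x‖ :=
            abs_real_inner_le_norm _ _
        _ ≤ (‖y - x‖ + ‖p y - p x‖) * ‖y - x‖ := by
            gcongr
            exact norm_sub_le _ _
        _ ≤ (‖y - x‖ + ‖y - x‖) * ‖y - x‖ := by
            gcongr
            exact prox_lip hg hγ hp y x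
        _ = 2 * A := by rw [hA]; ring
    have h10 : (-(2 * A)) / γ ≤ (J - I) / γ := by
      gcongr
      linarith [abs_le.mp h9, h8]
    have hdiv : (J - I) / γ = J / γ - I / γ := sub_div _ _ _
    have hfin : (-(2 * A)) / γ - A / (2 * γ) = -((5 / (2 * γ)) * A) := by
      field_simp; ring
    linarith
  · -- upper bound
    have h12 : (5 / (2 * γ)) * A - A / (2 * γ) = (2 / γ) * A := by field_simp; ring
    have h13 : (0:ℝ) ≤ (2 / γ) * A := by positivity
    linarith

lemma env_deriv (hg : ProperLscConvex g) (hγ : 0 < γ) (hp : IsProx γ g p) (x : Eucl n) :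
    HasFDerivAt (env g γ p) (innerSL ℝ ((γ⁻¹ : ℝ) • (x - p x))) x := by
  have hγ' : γ ≠ 0 := ne_of_gt hγ
  have h2γ : (0:ℝ) < 2 * γ := by linarith
  rw [HasFDerivAt, hasFDerivAtFilter_iff_isLittleO, Asymptotics.isLittleO_iff]
  intro c hc
  rw [Filter.prod_pure, Filter.eventually_map, Metric.eventually_nhds_iff]
  refine ⟨c * (2 * γ) / 5, by positivity, fun y hy => ?_⟩
  dsimp only
  have hk := env_err hg hγ hp x y
  have h1 : (innerSL ℝ ((γ⁻¹:ℝ) • (x - p x))) (y - x) = ⟪(γ⁻¹:ℝ) • (x - p x), y - x⟫ := rfl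
  rw [Real.norm_eq_abs, h1]
  have hd : ‖y - x‖ ≤ c * (2 * γ) / 5 := by
    rw [← dist_eq_norm]; exact hy.le
  have hb : 5 / (2 * γ) * ‖y - x‖ ≤ c := by
    rw [div_mul_eq_mul_div, div_le_iff₀ h2γ]
    nlinarith [hd]
  calc |env g γ p y - env g γ p x - ⟪(γ⁻¹:ℝ) • (x - p x), y - x⟫|
      ≤ (5 / (2 * γ)) * ‖y - x‖ ^ 2 := hk
    _ = (5 / (2 * γ) * ‖y - x‖) * ‖y - x‖ := by ring
    _ ≤ c * ‖y - x‖ := mul_le_mul_of_nonneg_right hb (norm_nonneg _)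

end Aux3

section Aux4

variable {n : ℕ} {g : Eucl n → EReal} {γ : ℝ} {p : Eucl n → Eucl n}

lemma fderiv_symm (hg : ProperLscConvex g) (hγ : 0 < γ) (hp : IsProx γ g p)
    {u : Eucl n} (hd : DifferentiableAt ℝ p u) (v w : Eucl n) :
    ⟪fderiv ℝ p u v, w⟫ = ⟪v, fderiv ℝ p u w⟫ := by
  have hγ' : γ ≠ 0 := ne_of_gt hγ
  set D := fderiv ℝ p u with hD
  set grad : Eucl n → Eucl n := fun z => (γ⁻¹ : ℝ) • (z - p z) with hgrad
  set Dg : Eucl n →L[ℝ] Eucl n :=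
    (γ⁻¹ : ℝ) • (ContinuousLinearMap.id ℝ (Eucl n) - D) with hDg
  have hgradD : HasFDerivAt grad Dg u := by
    have h1 : HasFDerivAt (fun z : Eucl n => z - p z)
        (ContinuousLinearMap.id ℝ (Eucl n) - D) u :=
      (hasFDerivAt_id u).sub hd.hasFDerivAt
    exact h1.const_smul (γ⁻¹ : ℝ)
  have hcomp : HasFDerivAt (fun z => innerSL ℝ (grad z))
      ((innerSL ℝ (E := Eucl n)).comp Dg) u :=
    (innerSL ℝ (E := Eucl n)).hasFDerivAt.comp u hgradD
  have hsym := second_derivative_symmetric (f := env g γ p)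
    (f' := fun z => innerSL ℝ (grad z)) (fun z => env_deriv hg hγ hp z) hcomp v w
  have h2 : ⟪Dg v, w⟫ = ⟪Dg w, v⟫ := hsym
  have h3 : ∀ a b : Eucl n, ⟪Dg a, b⟫ = γ⁻¹ * (⟪a, b⟫ - ⟪D a, b⟫) := by
    intro a b
    rw [hDg]
    simp only [ContinuousLinearMap.coe_smul', Pi.smul_apply, ContinuousLinearMap.sub_apply,
      ContinuousLinearMap.id_apply, real_inner_smul_left, inner_sub_left]
  rw [h3, h3] at h2
  have h4 : ⟪v, w⟫ - ⟪D v, w⟫ = ⟪w, v⟫ - ⟪D w, v⟫ :=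
    mul_left_cancel₀ (inv_ne_zero hγ') h2
  linarith [h4, real_inner_comm v w, real_inner_comm (D w) v]

lemma fderiv_firm (hg : ProperLscConvex g) (hγ : 0 < γ) (hp : IsProx γ g p)
    {u : Eucl n} (hd : DifferentiableAt ℝ p u) (d : Eucl n) :
    ‖fderiv ℝ p u d‖ ^ 2 ≤ ⟪fderiv ℝ p u d, d⟫ := by
  set D := fderiv ℝ p u with hD
  have hc : HasDerivAt (fun t : ℝ => u + t • d) d 0 := by
    simpa using ((hasDerivAt_id (0:ℝ)).smul_const d).const_add u
  have hq : HasDerivAt (fun t : ℝ => p (u + t • d)) (D d) 0 := by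
    have h1 : HasFDerivAt p D (u + (0:ℝ) • d) := by simpa using hd.hasFDerivAt
    exact h1.comp_hasDerivAt 0 hc
  rw [hasDerivAt_iff_tendsto_slope] at hq
  set F : Eucl n → ℝ := fun v => ⟪v, d⟫ - ‖v‖ ^ 2 with hF
  have hFc : Continuous F := by
    apply Continuous.sub
    · exact continuous_id.inner continuous_const
    · exact (continuous_norm).pow 2
  have hev : ∀ᶠ t in 𝓝[≠] (0:ℝ), 0 ≤ F (slope (fun t : ℝ => p (u + t • d)) 0 t) := by
    filter_upwards [self_mem_nhdsWithin] with t ht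
    have ht' : t ≠ 0 := ht
    set q : ℝ → Eucl n := fun t => p (u + t • d) with hqdef
    have hslope : slope q 0 t = t⁻¹ • (q t - q 0) := by
      rw [slope_def_module, sub_zero]
    have hfirm := prox_firm hg hγ hp (u + t • d) (u + (0:ℝ) • d)
    have harg : (u + t • d) - (u + (0:ℝ) • d) = t • d := by
      simp
    rw [harg] at hfirm
    have hfirm' : ‖q t - q 0‖ ^ 2 ≤ t * ⟪q t - q 0, d⟫ := by
      rw [hqdef]
      calc ‖p (u + t • d) - p (u + (0:ℝ) • d)‖ ^ 2
          ≤ ⟪p (u + t • d) - p (u + (0:ℝ) • d), t • d⟫ := hfirm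
        _ = t * ⟪p (u + t • d) - p (u + (0:ℝ) • d), d⟫ := real_inner_smul_right _ _ _
    rw [hF, hslope]
    simp only [norm_smul, real_inner_smul_left, Real.norm_eq_abs, mul_pow, sq_abs]
    have hti : t⁻¹ * t = 1 := inv_mul_cancel₀ ht'
    have key := mul_le_mul_of_nonneg_left hfirm' (mul_self_nonneg t⁻¹)
    have e : t⁻¹ * t⁻¹ * (t * ⟪q t - q 0, d⟫) = t⁻¹ * ⟪q t - q 0, d⟫ := by
      field_simp
    rw [e] at key
    have e2 : (t⁻¹) ^ 2 * ‖q t - q 0‖ ^ 2 = t⁻¹ * t⁻¹ * ‖q t - q 0‖ ^ 2 := by ring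
    rw [e2]
    linarith
  have hlim : Tendsto (fun t => F (slope (fun t : ℝ => p (u + t • d)) 0 t)) (𝓝[≠] (0:ℝ))
      (𝓝 (F (D d))) := (hFc.tendsto (D d)).comp hq
  have h0 : 0 ≤ F (D d) := ge_of_tendsto hlim hev
  rw [hF] at h0
  simp only at h0
  linarith

end Aux4

/-- B-subdifferential (limiting Jacobian) of a mapping `T` at `x`: limits of Jacobians
along sequences of differentiability points converging to `x`. -/
def Bsubdiff {n : ℕ} (T : Eucl n → Eucl n) (x : Eucl n) : Set (Eucl n →L[ℝ] Eucl n) :=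
  { H | ∃ u : ℕ → Eucl n, (∀ k, DifferentiableAt ℝ T (u k)) ∧
      Tendsto u atTop (𝓝 x) ∧ Tendsto (fun k => fderiv ℝ T (u k)) atTop (𝓝 H) }

/-- Clarke generalized Jacobian: convex hull of the B-subdifferential. -/
def ClarkeJacobian {n : ℕ} (T : Eucl n → Eucl n) (x : Eucl n) : Set (Eucl n →L[ℝ] Eucl n) :=
  convexHull ℝ (Bsubdiff T x)

/-- Every element of the Clarke generalized Jacobian of `prox_{γg}` at any point is a
symmetric positive semidefinite matrix of norm at most `1`. -/
theorem clarke_jacobian_prox_psd {n : ℕ} (g : Eucl n → EReal) (γ : ℝ) (p : Eucl n → Eucl n)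
    (hg : ProperLscConvex g) (hγ : 0 < γ) (hp : IsProx γ g p) (x : Eucl n) :
    ∀ P ∈ ClarkeJacobian p x,
      (∀ u v : Eucl n, ⟪P u, v⟫ = ⟪u, P v⟫) ∧
      (∀ u : Eucl n, 0 ≤ ⟪P u, u⟫) ∧
      ‖P‖ ≤ 1 := by
  intro P hP
  set S : Set (Eucl n →L[ℝ] Eucl n) :=
    {Q | (∀ u v : Eucl n, ⟪Q u, v⟫ = ⟪u, Q v⟫) ∧ ∀ u : Eucl n, ‖Q u‖ ^ 2 ≤ ⟪Q u, u⟫} with hS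
  have hBS : Bsubdiff p x ⊆ S := by
    rintro H ⟨u, hdiff, -, hconv⟩
    have happ : ∀ v : Eucl n, Tendsto (fun k => fderiv ℝ p (u k) v) atTop (𝓝 (H v)) := by
      intro v
      exact ((ContinuousLinearMap.apply ℝ (Eucl n) v).continuous.tendsto H).comp hconv
    constructor
    · intro v w
      have h1 : Tendsto (fun k => ⟪fderiv ℝ p (u k) v, w⟫) atTop (𝓝 ⟪H v, w⟫) :=
        (happ v).inner tendsto_const_nhds
      have h2 : Tendsto (fun k => ⟪(v : Eucl n), fderiv ℝ p (u k) w⟫) atTop (𝓝 ⟪v, H w⟫) :=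
        tendsto_const_nhds.inner (happ w)
      have heq : (fun k => ⟪fderiv ℝ p (u k) v, w⟫)
          = fun k => ⟪(v : Eucl n), fderiv ℝ p (u k) w⟫ :=
        funext fun k => fderiv_symm hg hγ hp (hdiff k) v w
      exact tendsto_nhds_unique (heq ▸ h1) h2
    · intro v
      have h1 : Tendsto (fun k => ⟪fderiv ℝ p (u k) v, v⟫ - ‖fderiv ℝ p (u k) v‖ ^ 2) atTop
          (𝓝 (⟪H v, v⟫ - ‖H v‖ ^ 2)) :=
        ((happ v).inner tendsto_const_nhds).sub (((happ v).norm).pow 2)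
      have h2 : ∀ k, (0:ℝ) ≤ ⟪fderiv ℝ p (u k) v, v⟫ - ‖fderiv ℝ p (u k) v‖ ^ 2 :=
        fun k => by linarith [fderiv_firm hg hγ hp (hdiff k) v]
      have h3 : (0:ℝ) ≤ ⟪H v, v⟫ - ‖H v‖ ^ 2 :=
        le_of_tendsto_of_tendsto' tendsto_const_nhds h1 h2
      linarith
  have hSc : Convex ℝ S := by
    rintro A ⟨hA1, hA2⟩ B ⟨hB1, hB2⟩ a b ha hb hab
    constructor
    · intro u v
      simp only [ContinuousLinearMap.add_apply, ContinuousLinearMap.coe_smul', Pi.smul_apply,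
        inner_add_left, inner_add_right, real_inner_smul_left, real_inner_smul_right]
      rw [hA1 u v, hB1 u v]
    · intro u
      have hnorm : ‖(a • A + b • B) u‖ ≤ a * ‖A u‖ + b * ‖B u‖ := by
        simp only [ContinuousLinearMap.add_apply, ContinuousLinearMap.coe_smul', Pi.smul_apply]
        refine le_trans (norm_add_le _ _) ?_
        rw [norm_smul, norm_smul, Real.norm_eq_abs, Real.norm_eq_abs,
          abs_of_nonneg ha, abs_of_nonneg hb]
      calc ‖(a • A + b • B) u‖ ^ 2 ≤ (a * ‖A u‖ + b * ‖B u‖) ^ 2 := by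
            have := pow_le_pow_left₀ (norm_nonneg _) hnorm 2
            exact this
        _ ≤ a * ‖A u‖ ^ 2 + b * ‖B u‖ ^ 2 := by
            nlinarith [mul_nonneg (mul_nonneg ha hb) (sq_nonneg (‖A u‖ - ‖B u‖))]
        _ ≤ a * ⟪A u, u⟫ + b * ⟪B u, u⟫ := by
            gcongr
            · exact hA2 u
            · exact hB2 u
        _ = ⟪(a • A + b • B) u, u⟫ := by
            simp only [ContinuousLinearMap.add_apply, ContinuousLinearMap.coe_smul',
              Pi.smul_apply, inner_add_left, real_inner_smul_left]
  have hmem : P ∈ S := convexHull_min hBS hSc hP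
  obtain ⟨hsym, hfirm⟩ := hmem
  refine ⟨hsym, fun u => le_trans (sq_nonneg ‖P u‖) (hfirm u), ?_⟩
  refine P.opNorm_le_bound zero_le_one fun u => ?_
  have h1 := hfirm u
  have h2 := real_inner_le_norm (P u) u
  rw [one_mul]
  rcases eq_or_lt_of_le (norm_nonneg (P u)) with h | h
  · rw [← h]; exact norm_nonneg u
  · nlinarith
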